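/- The biquotient action of the circle pair on Sp(3) given by left multiplication by diag(z,1,1) and inverse right multiplication by diag(z w², z w̄², z) is NOT effectively free: with z = -1 and w = i, the matrices diag(-1,1,1) and diag(-1·i², -1·(-i)², -1) = diag(1,1,-1) are conjugate in Sp(3) but are not both equal and central. -/

import Mathlib

open Quaternion Matrix

/-- The biquotient action with torus image `(diag(z,1,1), diag(z w², z w̄², z))` is not
effectively free: for `z = -1` and `w = i`, the matrices `diag(z,1,1) = diag(-1,1,1)` and
`diag(z w², z w̄², z) = diag(1,1,-1)` are conjugate in `Sp(3)` but not equal (hence not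
both equal and central). -/
theorem not_effectively_free_N12_candidate :
    let z : ℍ[ℝ] := -1
    let w : ℍ[ℝ] := ⟨0, 1, 0, 0⟩
    (∃ g : Matrix (Fin 3) (Fin 3) ℍ[ℝ], g * gᴴ = 1 ∧
        g * Matrix.diagonal ![z, 1, 1] =
          Matrix.diagonal ![z * w ^ 2, z * (star w) ^ 2, z] * g) ∧
      Matrix.diagonal ![z, 1, 1] ≠ Matrix.diagonal ![z * w ^ 2, z * (star w) ^ 2, z] := by
  intro z w
  have hw2 : w ^ 2 = -1 := by
    rw [pow_two]
    ext <;> simp only [Quaternion.re_mul, Quaternion.imI_mul, Quaternion.imJ_mul, Quaternion.imK_mul] <;> simp [w]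
  have hsw2 : (star w) ^ 2 = -1 := by
    rw [← star_pow, hw2]; simp
  refine ⟨⟨Matrix.of ![![0,0,1],![0,1,0],![1,0,0]], ?_, ?_⟩, ?_⟩
  · refine Matrix.ext fun i j => ?_
    fin_cases i <;> fin_cases j <;>
      simp [Matrix.mul_apply, Fin.sum_univ_three, Matrix.one_apply, Matrix.conjTranspose_apply]
  · refine Matrix.ext fun i j => ?_
    fin_cases i <;> fin_cases j <;>
      simp [Matrix.mul_apply, Fin.sum_univ_three, Matrix.diagonal, Matrix.vecHead, Matrix.vecTail, z, hw2, hsw2]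
  · intro h
    have := congrFun (congrFun h 0) 0
    simp [Matrix.diagonal, z, hw2] at this
    have h2 := congrArg QuaternionAlgebra.re this
    norm_num at h2
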